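/- Let G be an étale groupoid. Then the set D⁰ of dangerous units equals s(cl(G⁰) \ G⁰), where cl(G⁰) is the closure of the unit space G⁰ in G and s is the source map. Moreover, if G can be covered by countably many open bisections, then D⁰ is a Borel subset of G⁰. -/

import Mathlib

open MeasureTheory
open scoped ENNReal

/-- An étale groupoid: a topological groupoid (possibly non-Hausdorff) on the type `G`,
with partially defined multiplication `mul g h` (meaningful when `src g = rng h`),
inversion `inv`, source and range maps `src`, `rng`, and open unit space `unitSpace`
which is locally compact and Hausdorff; the source and range maps are local
homeomorphisms. -/
structure EtaleGroupoid (G : Type*) [TopologicalSpace G] : Type _ where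
  src : G → G
  rng : G → G
  mul : G → G → G
  inv : G → G
  unitSpace : Set G
  src_mem : ∀ g, src g ∈ unitSpace
  rng_mem : ∀ g, rng g ∈ unitSpace
  src_unit : ∀ u ∈ unitSpace, src u = u
  rng_unit : ∀ u ∈ unitSpace, rng u = u
  src_mul : ∀ g h, src g = rng h → src (mul g h) = src h
  rng_mul : ∀ g h, src g = rng h → rng (mul g h) = rng g
  mul_assoc : ∀ g h k, src g = rng h → src h = rng k →
    mul (mul g h) k = mul g (mul h k)
  src_inv : ∀ g, src (inv g) = rng g
  rng_inv : ∀ g, rng (inv g) = src g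
  inv_mul_self : ∀ g, mul (inv g) g = src g
  mul_inv_self : ∀ g, mul g (inv g) = rng g
  mul_src_self : ∀ g, mul g (src g) = g
  rng_mul_self : ∀ g, mul (rng g) g = g
  isOpen_unitSpace : IsOpen unitSpace
  t2_unitSpace : ∀ x ∈ unitSpace, ∀ y ∈ unitSpace, x ≠ y →
    ∃ U V : Set G, IsOpen U ∧ IsOpen V ∧ x ∈ U ∧ y ∈ V ∧ U ∩ V = ∅
  locallyCompact_unitSpace : ∀ x ∈ unitSpace, ∀ U : Set G, IsOpen U → x ∈ U →
    ∃ K V : Set G, IsCompact K ∧ IsOpen V ∧ x ∈ V ∧ V ⊆ K ∧ K ⊆ U ∩ unitSpace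
  continuous_inv : Continuous inv
  continuousOn_mul : ContinuousOn (fun p : G × G => mul p.1 p.2)
    {p : G × G | src p.1 = rng p.2}
  etale_src : ∀ g : G, ∃ U : Set G, IsOpen U ∧ g ∈ U ∧ Set.InjOn src U ∧
    ContinuousOn src U ∧ ∀ V ⊆ U, IsOpen V → IsOpen (src '' V)
  etale_rng : ∀ g : G, ∃ U : Set G, IsOpen U ∧ g ∈ U ∧ Set.InjOn rng U ∧
    ContinuousOn rng U ∧ ∀ V ⊆ U, IsOpen V → IsOpen (rng '' V)

namespace EtaleGroupoid

variable {G : Type*} [TopologicalSpace G] (E : EtaleGroupoid G)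

/-- The isotropy of `G`: arrows with equal source and range. -/
def iso : Set G := {g : G | E.src g = E.rng g}

/-- An (open) bisection: an open set on which both the source and range maps are
injective (hence homeomorphisms onto their images). -/
def IsBisection (U : Set G) : Prop :=
  IsOpen U ∧ Set.InjOn E.src U ∧ Set.InjOn E.rng U

/-- The semifinite part of a measure:
`μ_sf(A) = sup { μ(B) : B ⊆ A Borel, μ(B) < ∞ }`. -/
noncomputable def sfPart [MeasurableSpace G] (μ : Measure G) (A : Set G) : ℝ≥0∞ :=
  ⨆ (B : Set G) (_ : MeasurableSet B) (_ : B ⊆ A) (_ : μ B ≠ ⊤), μ B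

/-- A Radon measure on the unit space `G⁰`: a Borel measure on `G` concentrated on
`G⁰` which is finite on compact subsets of `G⁰`, inner regular on open subsets of `G⁰`
and outer regular on Borel subsets of `G⁰`. -/
def IsRadonOnUnits [MeasurableSpace G] (μ : Measure G) : Prop :=
  μ E.unitSpaceᶜ = 0 ∧
  (∀ K : Set G, K ⊆ E.unitSpace → IsCompact K → μ K ≠ ⊤) ∧
  (∀ U : Set G, IsOpen U → U ⊆ E.unitSpace →
    μ U = ⨆ (K : Set G) (_ : IsCompact K) (_ : K ⊆ U), μ K) ∧
  (∀ A : Set G, MeasurableSet A → A ⊆ E.unitSpace →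
    μ A = ⨅ (U : Set G) (_ : IsOpen U) (_ : A ⊆ U ∧ U ⊆ E.unitSpace), μ U)

/-- `G` is essentially free with respect to `μ`:
`μ_sf(s(U ∩ Iso(G) \ G⁰)) = 0` for every open bisection `U`. -/
def EssentiallyFree [MeasurableSpace G] (μ : Measure G) : Prop :=
  ∀ U : Set G, E.IsBisection U →
    sfPart μ (E.src '' ((U ∩ E.iso) \ E.unitSpace)) = 0

end EtaleGroupoid

namespace EtaleGroupoid

variable {G : Type*} [TopologicalSpace G]

/-- The set of dangerous units: units `y` such that some net (equivalently, some proper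
filter) converges simultaneously to `y` and to some `h ≠ y`. -/
def dangerousUnits (E : EtaleGroupoid G) : Set G :=
  {y : G | y ∈ E.unitSpace ∧ ∃ h : G, h ≠ y ∧
    ∃ F : Filter G, F.NeBot ∧ F ≤ nhds y ∧ F ≤ nhds h}

open Filter Topology in
lemma continuous_src' (E : EtaleGroupoid G) : Continuous E.src := by
  rw [continuous_iff_continuousAt]
  intro g
  obtain ⟨U, hUo, hgU, _, hcont, _⟩ := E.etale_src g
  exact hcont.continuousAt (hUo.mem_nhds hgU)

lemma isOpenMap_src' (E : EtaleGroupoid G) : IsOpenMap E.src := by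
  intro V hV
  rw [isOpen_iff_forall_mem_open]
  rintro y ⟨g, hgV, rfl⟩
  obtain ⟨U, hUo, hgU, _, _, hopen⟩ := E.etale_src g
  refine ⟨E.src '' (V ∩ U), Set.image_mono Set.inter_subset_left,
    hopen _ Set.inter_subset_right (hV.inter hUo), ⟨g, ⟨hgV, hgU⟩, rfl⟩⟩

open Filter Topology in
lemma dangerousUnits_eq_aux (E : EtaleGroupoid G) :
    E.dangerousUnits = E.src '' (closure E.unitSpace \ E.unitSpace) := by
  ext y
  constructor
  · rintro ⟨hy, h, hne, F, hF, hFy, hFh⟩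
    -- unitSpace belongs to F
    have hUF : E.unitSpace ∈ F := hFy (E.isOpen_unitSpace.mem_nhds hy)
    -- on units, src = id, so map src F = F
    have hmap : Filter.map E.src F = F := by
      have : E.src =ᶠ[F] id := by
        filter_upwards [hUF] with u hu using E.src_unit u hu
      rw [Filter.map_congr this, Filter.map_id]
    have hF_srch : F ≤ 𝓝 (E.src h) := by
      calc F = Filter.map E.src F := hmap.symm
        _ ≤ Filter.map E.src (𝓝 h) := Filter.map_mono hFh
        _ ≤ 𝓝 (E.src h) := (E.continuous_src'.continuousAt).tendsto
    -- src h = y by Hausdorffness of units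
    have hsy : E.src h = y := by
      by_contra hne'
      obtain ⟨U, V, hUo, hVo, hsU, hyV, hUV⟩ :=
        E.t2_unitSpace _ (E.src_mem h) _ hy hne'
      have : (U ∩ V : Set G) ∈ F :=
        F.inter_mem (hF_srch (hUo.mem_nhds hsU)) (hFy (hVo.mem_nhds hyV))
      rw [hUV] at this
      exact F.empty_notMem this
    have hcl : h ∈ closure E.unitSpace := by
      rw [mem_closure_iff_clusterPt]
      exact Filter.neBot_of_le (f := F) (le_inf hFh (Filter.le_principal_iff.mpr hUF))
    have hnot : h ∉ E.unitSpace := fun hh => hne ((E.src_unit h hh) ▸ hsy)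
    exact ⟨h, ⟨hcl, hnot⟩, hsy⟩
  · rintro ⟨h, ⟨hcl, hnot⟩, rfl⟩
    refine ⟨E.src_mem h, h, fun hh => hnot (hh ▸ E.src_mem h), 𝓝 h ⊓ 𝓟 E.unitSpace,
      mem_closure_iff_clusterPt.mp hcl, ?_, inf_le_left⟩
    intro V hV
    have h1 : E.src ⁻¹' V ∈ 𝓝 h := E.continuous_src'.continuousAt hV
    refine Filter.mem_of_superset (Filter.inter_mem_inf h1 (Filter.mem_principal_self _))
      fun u hu => ?_
    rw [← E.src_unit u hu.2]; exact hu.1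

/-- Let `G` be an étale groupoid.  Then the set `D⁰` of dangerous units
equals `s(cl(G⁰) \ G⁰)`; moreover, if `G` can be covered by countably many open
bisections then `D⁰` is a Borel subset of `G⁰`. -/
theorem dangerousUnits_eq_src_image_closure_diff
    [MeasurableSpace G] [BorelSpace G] (E : EtaleGroupoid G) :
    E.dangerousUnits = E.src '' (closure E.unitSpace \ E.unitSpace) ∧
    ((∃ 𝒰 : ℕ → Set G, (∀ n, E.IsBisection (𝒰 n)) ∧ (⋃ n, 𝒰 n) = Set.univ) →
      MeasurableSet E.dangerousUnits) := by
  refine ⟨E.dangerousUnits_eq_aux, ?_⟩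
  rintro ⟨𝒰, hbis, hcov⟩
  set C : Set G := closure E.unitSpace \ E.unitSpace with hC
  have hCclosed : IsClosed C := by
    rw [hC, Set.diff_eq]
    exact isClosed_closure.inter E.isOpen_unitSpace.isClosed_compl
  have hCun : C = ⋃ n, C ∩ 𝒰 n := by
    rw [← Set.inter_iUnion, hcov, Set.inter_univ]
  have key : ∀ n, E.src '' (C ∩ 𝒰 n) =
      closure (E.src '' (C ∩ 𝒰 n)) ∩ E.src '' (𝒰 n) := by
    intro n
    apply Set.Subset.antisymm
    · exact Set.subset_inter subset_closure (Set.image_mono Set.inter_subset_right)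
    · rintro y ⟨hycl, g, hg𝒰, rfl⟩
      have hgC : g ∈ closure (C ∩ 𝒰 n) := by
        rw [mem_closure_iff]
        intro W hWo hgW
        have hWopen : IsOpen (E.src '' (W ∩ 𝒰 n)) :=
          E.isOpenMap_src' _ (hWo.inter (hbis n).1)
        have hyW : E.src g ∈ E.src '' (W ∩ 𝒰 n) := ⟨g, ⟨hgW, hg𝒰⟩, rfl⟩
        obtain ⟨z, hz1, hz2⟩ := mem_closure_iff.mp hycl _ hWopen hyW
        obtain ⟨w, hw, hwz⟩ := hz1
        obtain ⟨c, hc, hcz⟩ := hz2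
        have : w = c := (hbis n).2.1 hw.2 hc.2 (hwz.trans hcz.symm)
        exact ⟨w, hw.1, this ▸ hc⟩
      have hgC' : g ∈ C :=
        hCclosed.closure_subset ((closure_mono Set.inter_subset_left) hgC)
      exact ⟨g, ⟨hgC', hg𝒰⟩, rfl⟩
  rw [E.dangerousUnits_eq_aux, ← hC, hCun, Set.image_iUnion]
  refine MeasurableSet.iUnion fun n => ?_
  rw [key n]
  exact isClosed_closure.measurableSet.inter
    (E.isOpenMap_src' _ (hbis n).1).measurableSet

end EtaleGroupoid
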